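/- If G is an upper-critical graph with N vertices and chromatic number k, and x is a vertex that is not adjacent to all other vertices, then G − x has N − 1 vertices and chromatic number k. -/

import Mathlib

open SimpleGraph

/-- A graph is *upper-critical* if adding any edge between two distinct
non-adjacent vertices strictly increases the chromatic number. -/
def UpperCritical {V : Type*} (G : SimpleGraph V) : Prop :=
  ∀ x y : V, x ≠ y → ¬G.Adj x y →
    G.chromaticNumber < (G ⊔ SimpleGraph.edge x y).chromaticNumber

theorem stmt_13 {V : Type*} [Fintype V] [DecidableEq V] (G : SimpleGraph V)
    (N k : ℕ) (hN : Fintype.card V = N) (hk : G.chromaticNumber = k)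
    (hUC : UpperCritical G)
    (x : V) (hx : ∃ w : V, w ≠ x ∧ ¬G.Adj x w) :
    Fintype.card {v : V // v ≠ x} = N - 1 ∧
      (G.induce {v : V | v ≠ x}).chromaticNumber = k := by
  obtain ⟨w, hwx, hxw⟩ := hx
  have hcard : Fintype.card {v : V // v ≠ x} = N - 1 := by
    subst hN
    simpa [Fintype.card_subtype_eq] using Fintype.card_subtype_compl (fun v : V => v = x)
  refine ⟨hcard, ?_⟩
  set S : Set V := {v : V | v ≠ x} with hS
  have hle : (G.induce S).chromaticNumber ≤ G.chromaticNumber :=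
    chromaticNumber_mono_of_hom (SimpleGraph.Embedding.induce S).toHom
  rw [hk] at hle
  set m : ℕ := (G.induce S).chromaticNumber.toNat with hm
  have hcol : (G.induce S).Colorable m := colorable_chromaticNumber_of_fintype _
  have hfin : (G.induce S).chromaticNumber = (m : ℕ∞) := by
    rw [hm, ENat.coe_toNat]
    exact ne_top_of_le_ne_top (by simp) hle
  have hmk : m ≤ k := by
    rw [hfin, Nat.cast_le] at hle
    exact hle
  have hkm : k ≤ m := by
    by_contra hlt
    push_neg at hlt
    obtain ⟨C⟩ := hcol
    have hxwne : x ≠ w := fun h => hwx h.symm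
    have hC' : (G ⊔ SimpleGraph.edge x w).Colorable (m + 1) := by
      refine ⟨SimpleGraph.Coloring.mk
        (fun v => if h : v = x then Fin.last m else (C ⟨v, h⟩).castSucc) ?_⟩
      intro a b hab
      by_cases ha : a = x <;> by_cases hb : b = x
      · exact absurd (ha.trans hb.symm) hab.ne
      · simp [ha, hb, (Fin.castSucc_lt_last _).ne']
      · simp [ha, hb, (Fin.castSucc_lt_last _).ne]
      · simp only [dif_neg ha, dif_neg hb]
        have hG : G.Adj a b := by
          rcases hab with h | h
          · exact h
          · rw [SimpleGraph.edge_adj] at h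
            rcases h.1 with ⟨h1, _⟩ | ⟨_, h2⟩
            · exact absurd h1 ha
            · exact absurd h2 hb
        intro hEq
        exact C.valid (by exact hG : (G.induce S).Adj ⟨a, ha⟩ ⟨b, hb⟩)
          (Fin.castSucc_injective _ hEq)
    have h1 : (G ⊔ SimpleGraph.edge x w).chromaticNumber ≤ ((m + 1 : ℕ) : ℕ∞) :=
      hC'.chromaticNumber_le
    have h2 := hUC x w hxwne hxw
    rw [hk] at h2
    have : (k : ℕ∞) < ((m + 1 : ℕ) : ℕ∞) := lt_of_lt_of_le h2 h1
    rw [Nat.cast_lt] at this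
    omega
  rw [hfin]
  exact_mod_cast congrArg Nat.cast (le_antisymm hmk hkm)
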